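/- arXiv:1505.01265 — 3 statements merged into one kernel-verified Lean document; each statement's English description precedes it below -/
import Mathlib

section
/- For any two finite simple graphs G and H, the independence number of their disjunctive product equals the product of their independence numbers: α(G ∗ H) = α(G) · α(H). -/
open Finset

namespace SimpleGraph

variable {V W : Type*}

/-- The strong graph product. -/
def strongProd (G : SimpleGraph V) (H : SimpleGraph W) : SimpleGraph (V × W) where
  Adj x y := x ≠ y ∧ (x.1 = y.1 ∨ G.Adj x.1 y.1) ∧ (x.2 = y.2 ∨ H.Adj x.2 y.2)
  symm := by
    constructor
    rintro x y ⟨hne, h1, h2⟩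
    exact ⟨hne.symm, h1.imp Eq.symm (fun h => G.adj_symm h), h2.imp Eq.symm (fun h => H.adj_symm h)⟩
  loopless := by constructor; rintro x ⟨hne, -, -⟩; exact hne rfl

/-- The disjunctive graph product. -/
def disjProd (G : SimpleGraph V) (H : SimpleGraph W) : SimpleGraph (V × W) where
  Adj x y := G.Adj x.1 y.1 ∨ H.Adj x.2 y.2
  symm := ⟨fun _ _ h => h.imp (fun h => G.adj_symm h) (fun h => H.adj_symm h)⟩
  loopless := ⟨fun x h => h.elim (fun h => G.irrefl h) (fun h => H.irrefl h)⟩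

/-- A finite set of vertices is independent if no two of its members are adjacent. -/
def IsIndep (G : SimpleGraph V) (s : Finset V) : Prop :=
  ∀ ⦃v⦄, v ∈ s → ∀ ⦃w⦄, w ∈ s → ¬ G.Adj v w

/-- The independence number. -/
noncomputable def alpha (G : SimpleGraph V) [Fintype V] : ℕ :=
  sSup {n | ∃ s : Finset V, G.IsIndep s ∧ s.card = n}

/-- The fractional packing number. -/
noncomputable def alphaStar (G : SimpleGraph V) [Fintype V] : ℝ :=
  sSup {x | ∃ t : V → ℝ, (∀ v, 0 ≤ t v) ∧
    (∀ C : Finset V, G.IsClique (C : Set V) → ∑ v ∈ C, t v ≤ 1) ∧ x = ∑ v, t v}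

/-- The Lovász number. -/
noncomputable def lovTheta (G : SimpleGraph V) [Fintype V] : ℝ :=
  sSup {x | ∃ B : Matrix V V ℝ, B.PosSemidef ∧ B.trace = 1 ∧
    (∀ v w, G.Adj v w → B v w = 0) ∧ x = ∑ v, ∑ w, B v w}

/-- Schrijver's variant of the Lovász number. -/
noncomputable def thetaMinus (G : SimpleGraph V) [Fintype V] : ℝ :=
  sSup {x | ∃ B : Matrix V V ℝ, B.PosSemidef ∧ B.trace = 1 ∧ (∀ v w, 0 ≤ B v w) ∧
    (∀ v w, G.Adj v w → B v w = 0) ∧ x = ∑ v, ∑ w, B v w}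

/-- Szegedy's variant of the Lovász number. -/
noncomputable def thetaPlus (G : SimpleGraph V) [Fintype V] : ℝ :=
  sSup {x | ∃ B : Matrix V V ℝ, B.PosSemidef ∧ B.trace = 1 ∧
    (∀ v w, G.Adj v w → B v w ≤ 0) ∧ x = ∑ v, ∑ w, B v w}

/-- The clique covering number. -/
noncomputable def cliqueCoverNum (G : SimpleGraph V) [Fintype V] : ℕ :=
  sInf {n | ∃ C : Fin n → Finset V, (∀ i, G.IsClique (C i : Set V)) ∧ ∀ v, ∃ i, v ∈ C i}

/-- The blow-up of a graph along integer vertex weights. -/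
def blup (G : SimpleGraph V) (p : V → ℕ) : SimpleGraph (Σ v, Fin (p v)) where
  Adj x y := G.Adj x.1 y.1
  symm := ⟨fun _ _ h => G.adj_symm h⟩
  loopless := ⟨fun x h => G.irrefl h⟩

/-- The weighted independence number (integer weights). -/
noncomputable def alphaWNat (G : SimpleGraph V) [Fintype V] (p : V → ℕ) : ℕ :=
  sSup {n | ∃ s : Finset V, G.IsIndep s ∧ n = ∑ v ∈ s, p v}

/-- The weighted independence number (real weights). -/
noncomputable def alphaW (G : SimpleGraph V) [Fintype V] (p : V → ℝ) : ℝ :=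
  sSup {x | ∃ s : Finset V, G.IsIndep s ∧ x = ∑ v ∈ s, p v}

end SimpleGraph

open SimpleGraph
open scoped RealInnerProductSpace

private lemma alpha_bddAbove {V : Type*} [Fintype V] (G : SimpleGraph V) :
    BddAbove {n | ∃ s : Finset V, G.IsIndep s ∧ s.card = n} := by
  refine ⟨Fintype.card V, ?_⟩
  rintro n ⟨s, -, rfl⟩
  exact s.card_le_univ

private lemma le_alpha {V : Type*} [Fintype V] {G : SimpleGraph V} {s : Finset V}
    (hs : G.IsIndep s) : s.card ≤ G.alpha :=
  le_csSup (alpha_bddAbove G) ⟨s, hs, rfl⟩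

private lemma alpha_le {V : Type*} [Fintype V] {G : SimpleGraph V} {k : ℕ}
    (h : ∀ s : Finset V, G.IsIndep s → s.card ≤ k) : G.alpha ≤ k := by
  refine csSup_le ⟨0, ∅, ?_, rfl⟩ ?_
  · intro v hv; simp at hv
  · rintro n ⟨s, hs, rfl⟩; exact h s hs

private lemma exists_alpha_witness {V : Type*} [Fintype V] (G : SimpleGraph V) :
    ∃ s : Finset V, G.IsIndep s ∧ s.card = G.alpha := by
  have hmem : G.alpha ∈ {n | ∃ s : Finset V, G.IsIndep s ∧ s.card = n} := by
    apply Nat.sSup_mem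
    · exact ⟨0, ∅, fun v hv => by simp at hv, rfl⟩
    · exact alpha_bddAbove G
  exact hmem

theorem alpha_disjProd {V W : Type*} [Fintype V] [Fintype W]
    (G : SimpleGraph V) (H : SimpleGraph W) :
    (G.disjProd H).alpha = G.alpha * H.alpha := by
  classical
  apply le_antisymm
  · -- upper bound
    apply alpha_le
    intro s hs
    have hsub : s ⊆ (s.image Prod.fst) ×ˢ (s.image Prod.snd) := by
      intro x hx
      simp only [Finset.mem_product, Finset.mem_image]
      exact ⟨⟨x, hx, rfl⟩, ⟨x, hx, rfl⟩⟩
    have h1 : G.IsIndep (s.image Prod.fst) := by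
      rintro v hv w hw hadj
      simp only [Finset.mem_image] at hv hw
      obtain ⟨x, hx, rfl⟩ := hv
      obtain ⟨y, hy, rfl⟩ := hw
      exact hs hx hy (Or.inl hadj)
    have h2 : H.IsIndep (s.image Prod.snd) := by
      rintro v hv w hw hadj
      simp only [Finset.mem_image] at hv hw
      obtain ⟨x, hx, rfl⟩ := hv
      obtain ⟨y, hy, rfl⟩ := hw
      exact hs hx hy (Or.inr hadj)
    calc s.card ≤ ((s.image Prod.fst) ×ˢ (s.image Prod.snd)).card :=
          Finset.card_le_card hsub
      _ = (s.image Prod.fst).card * (s.image Prod.snd).card := Finset.card_product _ _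
      _ ≤ G.alpha * H.alpha := Nat.mul_le_mul (le_alpha h1) (le_alpha h2)
  · -- lower bound
    obtain ⟨A, hA, hAcard⟩ := exists_alpha_witness G
    obtain ⟨B, hB, hBcard⟩ := exists_alpha_witness H
    have hind : (G.disjProd H).IsIndep (A ×ˢ B) := by
      rintro x hx y hy (hadj | hadj)
      · simp only [Finset.mem_product] at hx hy
        exact hA hx.1 hy.1 hadj
      · simp only [Finset.mem_product] at hx hy
        exact hB hx.2 hy.2 hadj
    calc G.alpha * H.alpha = (A ×ˢ B).card := by
          rw [Finset.card_product, hAcard, hBcard]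
      _ ≤ (G.disjProd H).alpha := le_alpha hind
end

section
/- The fractional packing number is multiplicative under the strong graph product: α*(G ⊠ H) = α*(G) · α*(H) for all finite simple graphs G and H. -/
open Finset

open SimpleGraph
open scoped RealInnerProductSpace


namespace AuxAS

open SimpleGraph

variable {V W : Type*} [Fintype V] [Fintype W]

/-- The feasible-value set of the fractional packing LP. -/
def pSet (G : SimpleGraph V) : Set ℝ :=
  {x | ∃ t : V → ℝ, (∀ v, 0 ≤ t v) ∧
    (∀ C : Finset V, G.IsClique (C : Set V) → ∑ v ∈ C, t v ≤ 1) ∧ x = ∑ v, t v}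

lemma alphaStar_eq (G : SimpleGraph V) : G.alphaStar = sSup (pSet G) := rfl

lemma zero_mem_pSet (G : SimpleGraph V) : (0:ℝ) ∈ pSet G :=
  ⟨0, fun _ => le_refl 0, fun C _ => by simp, by simp⟩

lemma pSet_nonneg {G : SimpleGraph V} {x : ℝ} (hx : x ∈ pSet G) : 0 ≤ x := by
  obtain ⟨t, ht0, -, rfl⟩ := hx
  exact Finset.sum_nonneg fun v _ => ht0 v

lemma bddAbove_pSet (G : SimpleGraph V) : BddAbove (pSet G) := by
  refine ⟨Fintype.card V, ?_⟩
  rintro x ⟨t, ht0, htC, rfl⟩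
  calc ∑ v, t v ≤ ∑ _v : V, (1:ℝ) := Finset.sum_le_sum fun v _ => by
        simpa using htC {v} (by simp [SimpleGraph.isClique_iff, Set.pairwise_singleton])
    _ = Fintype.card V := by simp

lemma mem_le_alphaStar {G : SimpleGraph V} {x : ℝ} (hx : x ∈ pSet G) : x ≤ G.alphaStar :=
  le_csSup (bddAbove_pSet G) hx

lemma alphaStar_nonneg (G : SimpleGraph V) : 0 ≤ G.alphaStar :=
  mem_le_alphaStar (zero_mem_pSet G)

lemma one_le_alphaStar (G : SimpleGraph V) [Nonempty V] : (1:ℝ) ≤ G.alphaStar := by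
  have hcard : (0:ℝ) < Fintype.card V := by
    exact_mod_cast Fintype.card_pos
  have hmem : (1:ℝ) ∈ pSet G := by
    refine ⟨fun _ => (Fintype.card V : ℝ)⁻¹, fun v => by positivity, ?_, ?_⟩
    · intro C _
      rw [Finset.sum_const, nsmul_eq_mul]
      have h1 : (C.card : ℝ) ≤ Fintype.card V := by exact_mod_cast Finset.card_le_univ C
      calc (C.card:ℝ) * (Fintype.card V:ℝ)⁻¹
          ≤ (Fintype.card V:ℝ) * (Fintype.card V:ℝ)⁻¹ :=
            mul_le_mul_of_nonneg_right h1 (by positivity)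
        _ = 1 := mul_inv_cancel₀ hcard.ne'
    · rw [Finset.sum_const, nsmul_eq_mul, Finset.card_univ, mul_inv_cancel₀ hcard.ne']
  exact mem_le_alphaStar hmem

lemma prodClique {G : SimpleGraph V} {H : SimpleGraph W} {C : Finset V} {D : Finset W}
    (hC : G.IsClique (C : Set V)) (hD : H.IsClique (D : Set W)) :
    (G.strongProd H).IsClique ((C ×ˢ D : Finset (V × W)) : Set (V × W)) := by
  intro p hp q hq hne
  rw [Finset.coe_product, Set.mem_prod] at hp hq
  refine ⟨hne, ?_, ?_⟩
  · by_cases h : p.1 = q.1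
    · exact Or.inl h
    · exact Or.inr (hC hp.1 hq.1 h)
  · by_cases h : p.2 = q.2
    · exact Or.inl h
    · exact Or.inr (hD hp.2 hq.2 h)

lemma fstClique [DecidableEq V] {G : SimpleGraph V} {H : SimpleGraph W} {C : Finset (V × W)}
    (h : (G.strongProd H).IsClique (C : Set (V × W))) :
    G.IsClique ((C.image Prod.fst : Finset V) : Set V) := by
  intro a ha b hb hne
  rw [Finset.mem_coe, Finset.mem_image] at ha hb
  obtain ⟨p, hp, rfl⟩ := ha
  obtain ⟨q, hq, rfl⟩ := hb
  have hpq : p ≠ q := fun h' => hne (by rw [h'])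
  obtain ⟨-, h1, -⟩ := h (Finset.mem_coe.mpr hp) (Finset.mem_coe.mpr hq) hpq
  exact h1.resolve_left hne

lemma sndClique [DecidableEq W] {G : SimpleGraph V} {H : SimpleGraph W} {C : Finset (V × W)}
    (h : (G.strongProd H).IsClique (C : Set (V × W))) :
    H.IsClique ((C.image Prod.snd : Finset W) : Set W) := by
  intro a ha b hb hne
  rw [Finset.mem_coe, Finset.mem_image] at ha hb
  obtain ⟨p, hp, rfl⟩ := ha
  obtain ⟨q, hq, rfl⟩ := hb
  have hpq : p ≠ q := fun h' => hne (by rw [h'])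
  obtain ⟨-, -, h2⟩ := h (Finset.mem_coe.mpr hp) (Finset.mem_coe.mpr hq) hpq
  exact h2.resolve_left hne

lemma mul_mem_pSet_prod {G : SimpleGraph V} {H : SimpleGraph W} {x y : ℝ}
    (hx : x ∈ pSet G) (hy : y ∈ pSet H) : x * y ∈ pSet (G.strongProd H) := by
  classical
  obtain ⟨t, ht0, htC, rfl⟩ := hx
  obtain ⟨s, hs0, hsC, rfl⟩ := hy
  refine ⟨fun p => t p.1 * s p.2, fun p => mul_nonneg (ht0 _) (hs0 _), ?_, ?_⟩
  · intro C hC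
    have hsub : C ⊆ (C.image Prod.fst) ×ˢ (C.image Prod.snd) := fun p hp =>
      Finset.mem_product.mpr ⟨Finset.mem_image_of_mem _ hp, Finset.mem_image_of_mem _ hp⟩
    calc ∑ p ∈ C, t p.1 * s p.2
        ≤ ∑ p ∈ (C.image Prod.fst) ×ˢ (C.image Prod.snd), t p.1 * s p.2 :=
          Finset.sum_le_sum_of_subset_of_nonneg hsub fun p _ _ => mul_nonneg (ht0 _) (hs0 _)
      _ = (∑ v ∈ C.image Prod.fst, t v) * (∑ w ∈ C.image Prod.snd, s w) := by
          rw [Finset.sum_product, Finset.sum_mul_sum]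
      _ ≤ 1 := by
          have := mul_le_one₀ (htC _ (fstClique hC))
            (Finset.sum_nonneg fun w _ => hs0 _) (hsC _ (sndClique hC))
          exact this
  · rw [Fintype.sum_prod_type, Finset.sum_mul_sum]

end AuxAS

open AuxAS in
theorem alphaStar_strongProd' {V W : Type*} [Fintype V] [Fintype W]
    (G : SimpleGraph V) (H : SimpleGraph W) :
    (G.strongProd H).alphaStar = G.alphaStar * H.alphaStar := by
  apply le_antisymm
  · -- upper bound
    rw [alphaStar_eq (G.strongProd H)]
    refine csSup_le ⟨0, zero_mem_pSet _⟩ ?_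
    rintro x ⟨t, ht0, htC, rfl⟩
    by_cases hW : Nonempty W
    · have haH : (1:ℝ) ≤ H.alphaStar := one_le_alphaStar H
      have haH0 : (0:ℝ) < H.alphaStar := lt_of_lt_of_le one_pos haH
      have key : ∀ C : Finset V, G.IsClique (C : Set V) →
          ∑ v ∈ C, ∑ w, t (v, w) ≤ H.alphaStar := by
        intro C hC
        have hmem : (∑ w, ∑ v ∈ C, t (v, w)) ∈ pSet H := by
          refine ⟨fun w => ∑ v ∈ C, t (v, w),
            fun w => Finset.sum_nonneg fun v _ => ht0 _, ?_, rfl⟩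
          intro D hD
          have h1 : ∑ w ∈ D, ∑ v ∈ C, t (v, w) = ∑ p ∈ C ×ˢ D, t p := by
            rw [Finset.sum_product]; exact Finset.sum_comm
          rw [h1]
          exact htC (C ×ˢ D) (prodClique hC hD)
        have h2 := mem_le_alphaStar hmem
        rwa [Finset.sum_comm] at h2
      have humem : (∑ v, (∑ w, t (v, w)) / H.alphaStar) ∈ pSet G := by
        refine ⟨fun v => (∑ w, t (v, w)) / H.alphaStar,
          fun v => div_nonneg (Finset.sum_nonneg fun w _ => ht0 _) haH0.le, ?_, rfl⟩
        intro C hC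
        rw [← Finset.sum_div, div_le_one haH0]
        exact key C hC
      have h2 := mem_le_alphaStar humem
      rw [← Finset.sum_div, div_le_iff₀ haH0] at h2
      calc ∑ p : V × W, t p = ∑ v, ∑ w, t (v, w) := Fintype.sum_prod_type _
        _ ≤ G.alphaStar * H.alphaStar := h2
    · have hE : IsEmpty W := not_nonempty_iff.mp hW
      have : ∑ p : V × W, t p = 0 := by
        rw [Fintype.sum_prod_type]
        simp
      rw [this]
      exact mul_nonneg (alphaStar_nonneg G) (alphaStar_nonneg H)
  · -- lower bound
    have hstep : ∀ x ∈ pSet G, x * H.alphaStar ≤ (G.strongProd H).alphaStar := by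
      intro x hx
      rcases eq_or_lt_of_le (pSet_nonneg hx) with h0 | h0
      · rw [← h0, zero_mul]; exact alphaStar_nonneg _
      · rw [mul_comm, ← le_div_iff₀ h0, alphaStar_eq H]
        refine csSup_le ⟨0, zero_mem_pSet _⟩ fun y hy => ?_
        rw [le_div_iff₀ h0, mul_comm]
        exact mem_le_alphaStar (mul_mem_pSet_prod hx hy)
    rcases eq_or_lt_of_le (alphaStar_nonneg H) with h0 | h0
    · rw [← h0, mul_zero]; exact alphaStar_nonneg _
    · rw [← le_div_iff₀ h0, alphaStar_eq G]
      exact csSup_le ⟨0, zero_mem_pSet _⟩ fun x hx => (le_div_iff₀ h0).mpr (hstep x hx)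

theorem alphaStar_strongProd {V W : Type*} [Fintype V] [Fintype W]
    (G : SimpleGraph V) (H : SimpleGraph W) :
    (G.strongProd H).alphaStar = G.alphaStar * H.alphaStar := alphaStar_strongProd' G H
end

section
/- If B is an optimal solution to the SDP defining ϑ⁺(G) (maximize tr(BJ) over PSD B with tr B = 1 and B_{vw} ≤ 0 for edges vw), then every nonzero row of B has strictly positive row sum. -/
open Finset

open SimpleGraph
open scoped RealInnerProductSpace

set_option linter.unusedSectionVars false

section Helper
variable {V : Type*} [Fintype V] [DecidableEq V]

lemma psd_row_eq_zero {B : Matrix V V ℝ} (hB : B.PosSemidef) {v : V}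
    (h : B v v = 0) (w : V) : B v w = 0 := by
  have hx := (Matrix.PosSemidef.dotProduct_mulVec_zero_iff hB (Pi.single v 1)).mp
    (by simpa [Matrix.mulVec_single, dotProduct, Pi.single_apply] using h)
  have hw := congrFun hx w
  have hs := congrFun (congrFun hB.1 v) w
  simp [Matrix.mulVec_single] at hw
  simpa [Matrix.conjTranspose_apply, hw] using hs.symm

lemma psd_diag_nonneg {B : Matrix V V ℝ} (hB : B.PosSemidef) (v : V) : 0 ≤ B v v := by
  exact hB.diag_nonneg

lemma psd_smul {B : Matrix V V ℝ} (hB : B.PosSemidef) {c : ℝ} (hc : 0 ≤ c) :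
    (c • B).PosSemidef := by
  exact hB.smul hc

end Helper

theorem optimal_thetaPlus_rowsum_pos {V : Type*} [Fintype V] (G : SimpleGraph V)
    (B : Matrix V V ℝ) (hB : B.PosSemidef) (htr : B.trace = 1)
    (hedge : ∀ v w, G.Adj v w → B v w ≤ 0)
    (hopt : ∀ B' : Matrix V V ℝ, B'.PosSemidef → B'.trace = 1 →
        (∀ v w, G.Adj v w → B' v w ≤ 0) → ∑ v, ∑ w, B' v w ≤ ∑ v, ∑ w, B v w) :
    ∀ v, (∃ w, B v w ≠ 0) → 0 < ∑ w, B v w := by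
  classical
  intro v hv
  obtain ⟨w0, hw0⟩ := hv
  by_contra hcon
  push_neg at hcon
  -- symmetry
  have hsym : ∀ i j, B i j = B j i := fun i j => by
    have := congrFun (congrFun hB.1 i) j
    simpa [Matrix.conjTranspose_apply] using this.symm
  set S : ℝ := ∑ i, ∑ j, B i j with hS
  set r : ℝ := ∑ w, B v w with hr
  have hrv : ∑ i, B i v = r := by
    rw [hr]; exact Finset.sum_congr rfl fun i _ => hsym i v
  -- B v v > 0
  have hvv_ne : B v v ≠ 0 := fun h => hw0 (psd_row_eq_zero hB h w0)
  have hvv_pos : 0 < B v v := lt_of_le_of_ne (psd_diag_nonneg hB v) (Ne.symm hvv_ne)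
  -- S ≥ 1 via the diagonal indicator matrix
  have hS1 : 1 ≤ S := by
    have := hopt (Matrix.diagonal (Pi.single v (1:ℝ)))
      (Matrix.posSemidef_diagonal_iff.mpr fun i => by
        by_cases h : i = v <;> simp [h, Pi.single_apply])
      (by simp [Matrix.trace, Matrix.diag])
      (fun i j hij => by
        have : i ≠ j := G.ne_of_adj hij
        simp [Matrix.diagonal_apply_ne _ this])
    refine le_trans (le_of_eq ?_) this
    simp [Matrix.diagonal_apply]
  -- trace = sum of diagonal, each nonneg
  have htr' : ∑ i, B i i = 1 := htr
  -- B v v < 1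
  have hvv_lt1 : B v v < 1 := by
    rcases lt_or_ge (B v v) 1 with h | h
    · exact h
    -- then all other diagonals are 0
    have hrest : ∑ i ∈ Finset.univ.erase v, B i i = 1 - B v v := by
      have := Finset.add_sum_erase Finset.univ (fun i => B i i) (Finset.mem_univ v)
      linarith [htr', this.symm]
    have hrest0 : ∀ i ∈ Finset.univ.erase v, B i i = 0 := by
      intro i hi
      have hle : ∑ i ∈ Finset.univ.erase v, B i i ≤ 0 := by linarith
      have := (Finset.sum_eq_zero_iff_of_nonneg
        (fun i _ => psd_diag_nonneg hB i)).mp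
        (le_antisymm hle (Finset.sum_nonneg fun i _ => psd_diag_nonneg hB i))
      exact this i hi
    have : r = B v v := by
      rw [hr, Finset.sum_eq_single v (fun j _ hj => by
        rw [hsym]; exact psd_row_eq_zero hB (hrest0 j (Finset.mem_erase.mpr ⟨hj, Finset.mem_univ j⟩)) v)
        (by simp)]
    linarith
  -- construct the deflated matrix
  set d : V → ℝ := fun i => if i = v then 0 else 1 with hd
  set D : Matrix V V ℝ := Matrix.diagonal d with hD
  set c : ℝ := (1 - B v v)⁻¹ with hc
  have hc_pos : 0 < c := inv_pos.mpr (by linarith)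
  set M : Matrix V V ℝ := c • (D * B * D) with hM
  have hDh : D.conjTranspose = D := by
    rw [hD]; rw [Matrix.diagonal_conjTranspose]; simp
  have hMpsd : M.PosSemidef := by
    refine psd_smul ?_ hc_pos.le
    have := hB.mul_mul_conjTranspose_same D
    rwa [hDh] at this
  have hMapp : ∀ i j, M i j = c * (d i * B i j * d j) := by
    intro i j
    rw [hM, Matrix.smul_apply, smul_eq_mul]
    rw [hD, Matrix.mul_diagonal, Matrix.diagonal_mul]
  -- key sums
  have hdsum : ∀ (f : V → ℝ), ∑ j, f j * d j = (∑ j, f j) - f v := by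
    intro f
    rw [hd]
    have : ∀ j, f j * (if j = v then (0:ℝ) else 1) = f j - (if j = v then f j else 0) := by
      intro j; by_cases h : j = v <;> simp [h]
    rw [Finset.sum_congr rfl fun j _ => this j, Finset.sum_sub_distrib]
    simp
  have hdsum' : ∀ (f : V → ℝ), ∑ j, d j * f j = (∑ j, f j) - f v := by
    intro f
    simpa [mul_comm] using hdsum f
  have hMtr : M.trace = 1 := by
    rw [Matrix.trace]
    have : ∀ i, M.diag i = c * (B i i * d i - (if i = v then B i v else 0) * d i) := by
      intro i
      rw [Matrix.diag_apply, hMapp]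
      by_cases h : i = v <;> simp [h, hd] <;> ring
    rw [Finset.sum_congr rfl fun i _ => this i, ← Finset.mul_sum]
    have : ∑ i, (B i i * d i - (if i = v then B i v else 0) * d i) = 1 - B v v := by
      rw [Finset.sum_sub_distrib, hdsum (fun i => B i i)]
      have h2 : ∑ i, (if i = v then B i v else 0) * d i = 0 := by
        apply Finset.sum_eq_zero
        intro i _
        by_cases h : i = v <;> simp [h, hd]
      rw [h2, htr']
      ring
    rw [this, hc]
    field_simp
    exact div_self (by linarith)
  have hMedge : ∀ i j, G.Adj i j → M i j ≤ 0 := by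
    intro i j hij
    rw [hMapp]
    have h1 : d i * B i j * d j ≤ 0 := by
      by_cases h : i = v
      · simp [h, hd]
      · by_cases h' : j = v
        · simp [h', hd]
        · simp only [hd, if_neg h, if_neg h']
          have := hedge i j hij
          linarith
    exact mul_nonpos_of_nonneg_of_nonpos hc_pos.le h1
  have hMsum : ∑ i, ∑ j, M i j = c * (S - 2 * r + B v v) := by
    have : ∀ i, ∑ j, M i j = c * (d i * ((∑ j, B i j) - B i v)) := by
      intro i
      rw [Finset.sum_congr rfl fun j _ => hMapp i j, ← Finset.mul_sum]
      congr 1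
      have : ∀ j, d i * B i j * d j = d i * (B i j * d j) := fun j => by ring
      rw [Finset.sum_congr rfl fun j _ => this j, ← Finset.mul_sum, hdsum (fun j => B i j)]
    rw [Finset.sum_congr rfl fun i _ => this i, ← Finset.mul_sum]
    congr 1
    have expand : ∀ i, d i * ((∑ j, B i j) - B i v)
        = ((∑ j, B i j) - B i v) - (if i = v then ((∑ j, B i j) - B i v) else 0) := by
      intro i; by_cases h : i = v <;> simp [h, hd]
    rw [Finset.sum_congr rfl fun i _ => expand i, Finset.sum_sub_distrib,
      Finset.sum_sub_distrib, Finset.sum_ite_eq' Finset.univ v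
        (fun i => (∑ j, B i j) - B i v)]
    simp only [Finset.mem_univ, if_true]
    rw [← hS, hrv, ← hr]
    ring
  -- apply optimality
  have hle := hopt M hMpsd hMtr hMedge
  rw [hMsum] at hle
  have hpos : (0:ℝ) < 1 - B v v := by linarith
  have h1 : S - 2 * r + B v v ≤ (1 - B v v) * S :=
    (inv_mul_le_iff₀ hpos).mp hle
  nlinarith [hS1, hvv_pos, hcon]
end
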